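/- Let w₁, ..., w_h ∈ ℝⁿ be pairwise non-colinear nonzero vectors and c₁, ..., c_h ∈ ℝ. If ∑ᵢ cᵢ ψ(⟨wᵢ,x⟩) = 0 for all x ∈ ℝⁿ, where ψ is the ReLU function, then cᵢ = 0 for every i. -/

import Mathlib

open Finset

noncomputable def relu (t : ℝ) : ℝ := max t 0

lemma relu_add_relu_neg (t : ℝ) : relu t + relu (-t) = |t| := by
  unfold relu
  rcases le_or_gt 0 t with h | h
  · rw [max_eq_left h, max_eq_right (by linarith), abs_of_nonneg h]; ring
  · rw [max_eq_right h.le, max_eq_left (by linarith), abs_of_neg h]; ring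

lemma abs_tri (a s : ℝ) (h : |s| ≤ |a|) : |a + s| + |a - s| - 2 * |a| = 0 := by
  rcases abs_le.1 h with ⟨h1, h2⟩
  rcases le_or_gt 0 a with ha | ha
  · rw [abs_of_nonneg ha] at h1 h2
    rw [abs_of_nonneg ha, abs_of_nonneg (by linarith), abs_of_nonneg (by linarith)]; ring
  · rw [abs_of_neg ha] at h1 h2
    rw [abs_of_neg ha, abs_of_nonpos (by linarith), abs_of_nonpos (by linarith)]; ring

/-- If `w₁, ..., w_h` are nonzero and pairwise non-colinear and
`∑ᵢ cᵢ ψ(⟨wᵢ,x⟩) = 0` for all `x`, then all `cᵢ = 0`. -/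
theorem relu_units_linear_independent {n h : ℕ}
    (w : Fin h → (Fin n → ℝ)) (c : Fin h → ℝ)
    (hw : ∀ i, w i ≠ 0)
    (hcol : ∀ i j, i ≠ j → ¬ ∃ α : ℝ, α ≠ 0 ∧ w i = α • w j)
    (hzero : ∀ x : Fin n → ℝ, ∑ i, c i * relu (∑ j, w i j * x j) = 0) :
    ∀ i, c i = 0 := by
  intro i
  -- linear functionals
  set L : Fin h → ((Fin n → ℝ) →ₗ[ℝ] ℝ) := fun j =>
    { toFun := fun x => ∑ k, w j k * x k
      map_add' := by intro x y; simp [mul_add, Finset.sum_add_distrib]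
      map_smul' := by
        intro r x
        simp only [Pi.smul_apply, smul_eq_mul, RingHom.id_apply, Finset.mul_sum]
        exact Finset.sum_congr rfl fun k _ => by ring } with hL
  have hLapply : ∀ j x, L j x = ∑ k, w j k * x k := fun j x => rfl
  -- absolute-value identity
  have hAbs : ∀ x : Fin n → ℝ, ∑ j, c j * |L j x| = 0 := by
    intro x
    have h1 := hzero x
    have h2 := hzero (-x)
    have : ∑ j, c j * |L j x| =
        (∑ j, c j * relu (∑ k, w j k * x k)) + ∑ j, c j * relu (∑ k, w j k * (-x) k) := by
      rw [← Finset.sum_add_distrib]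
      refine Finset.sum_congr rfl fun j _ => ?_
      have hneg : ∑ k, w j k * (-x) k = -(∑ k, w j k * x k) := by
        rw [← Finset.sum_neg_distrib]
        exact Finset.sum_congr rfl fun k _ => by simp [mul_comm]
      rw [hneg, hLapply, ← relu_add_relu_neg]; ring
    rw [this, h1, h2, add_zero]
  -- find x₀ in ker (L i) avoiding all other kernels
  have hker : ∃ x₀ : Fin n → ℝ, L i x₀ = 0 ∧ ∀ j, j ≠ i → L j x₀ ≠ 0 := by
    by_contra hcon
    push_neg at hcon
    -- kernels of restricted functionals cover ker (L i)
    set E := LinearMap.ker (L i)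
    set p : {j : Fin h // j ≠ i} → Subspace ℝ E :=
      fun j => Submodule.comap E.subtype (LinearMap.ker (L j.1)) with hp
    have hcov : ⋃ j, (p j : Set E) = Set.univ := by
      ext y
      simp only [Set.mem_iUnion, Set.mem_univ, iff_true]
      obtain ⟨j, hj, hj0⟩ := hcon y.1 (by simpa using y.2)
      exact ⟨⟨j, hj⟩, by simpa [hp] using hj0⟩
    obtain ⟨⟨j, hji⟩, hjtop⟩ := Subspace.exists_eq_top_of_iUnion_eq_univ hcov
    -- so ker (L i) ≤ ker (L j)
    have hle : ∀ x, L i x = 0 → L j x = 0 := by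
      intro x hx
      have : (⟨x, LinearMap.mem_ker.2 hx⟩ : E) ∈ p ⟨j, hji⟩ := by rw [hjtop]; trivial
      simpa [hp] using this
    -- then w j = α • w i
    have hii : L i (w i) > 0 := by
      rw [hLapply]
      have : ∀ k, w i k * w i k = (w i k)^2 := fun k => (sq (w i k)).symm
      rw [Finset.sum_congr rfl fun k _ => this k]
      rcases Function.ne_iff.1 (hw i) with ⟨k, hk⟩
      exact Finset.sum_pos' (fun k _ => sq_nonneg _) ⟨k, Finset.mem_univ k, by simpa [sq_pos_iff] using hk⟩
    set α := L j (w i) / L i (w i) with hα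
    have hprop : ∀ x, L j x = α * L i x := by
      intro x
      have hxker : L i (x - (L i x / L i (w i)) • w i) = 0 := by
        rw [map_sub, map_smul]
        rw [smul_eq_mul, div_mul_cancel₀ _ (ne_of_gt hii), sub_self]
      have := hle _ hxker
      rw [map_sub, map_smul] at this
      simp only [smul_eq_mul] at this
      have hLi : L i (w i) ≠ 0 := ne_of_gt hii
      field_simp [hα] at this ⊢
      rw [hα, mul_div_assoc', eq_div_iff hLi]
      linarith [this]
    have hwj : w j = α • w i := by
      funext k
      have := hprop (Pi.single k 1)
      rw [hLapply, hLapply] at this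
      simpa [Pi.single_apply, mul_ite, Finset.sum_ite_eq'] using this
    have hα0 : α ≠ 0 := by
      intro h0
      exact hw j (by rw [hwj, h0, zero_smul])
    exact hcol j i hji ⟨α, hα0, hwj⟩
  obtain ⟨x₀, hx₀, hx₀'⟩ := hker
  set a : Fin h → ℝ := fun j => L j x₀ with ha
  set b : Fin h → ℝ := fun j => L j (w i) with hb
  have hbi : b i > 0 := by
    rw [hb]
    simp only [hLapply]
    have : ∀ k, w i k * w i k = (w i k)^2 := fun k => (sq (w i k)).symm
    rw [Finset.sum_congr rfl fun k _ => this k]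
    rcases Function.ne_iff.1 (hw i) with ⟨k, hk⟩
    exact Finset.sum_pos' (fun k _ => sq_nonneg _) ⟨k, Finset.mem_univ k, by simpa [sq_pos_iff] using hk⟩
  -- choose small t > 0 with t * |b j| ≤ |a j| for j ≠ i
  have hsmall : ∃ t : ℝ, 0 < t ∧ ∀ j, j ≠ i → t * |b j| ≤ |a j| := by
    have hev : ∀ᶠ t in nhdsWithin (0:ℝ) (Set.Ioi 0),
        ∀ j ∈ Finset.univ.erase i, t * |b j| ≤ |a j| := by
      rw [Filter.eventually_all_finset]
      intro j hj
      have hja : |a j| > 0 := abs_pos.2 (hx₀' j (Finset.ne_of_mem_erase hj))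
      have hcont : Filter.Tendsto (fun t : ℝ => t * |b j|) (nhdsWithin 0 (Set.Ioi 0))
          (nhds 0) :=
        ((continuous_id.mul continuous_const).tendsto' 0 0 (by simp)).mono_left nhdsWithin_le_nhds
      exact hcont.eventually (eventually_le_nhds hja)
    have hpos : ∀ᶠ t in nhdsWithin (0:ℝ) (Set.Ioi 0), (0:ℝ) < t :=
      eventually_nhdsWithin_of_forall (fun t ht => ht)
    obtain ⟨t, ht1, ht2⟩ := (hpos.and hev).exists
    exact ⟨t, ht1, fun j hj => ht2 j (Finset.mem_erase.2 ⟨hj, Finset.mem_univ j⟩)⟩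
  obtain ⟨t, ht, htle⟩ := hsmall
  -- the key sum
  have hkey : ∑ j, c j * (|a j + t * b j| + |a j - t * b j| - 2 * |a j|) = 0 := by
    have e1 : ∀ j, L j (x₀ + t • w i) = a j + t * b j := by
      intro j; rw [map_add, map_smul]; simp [ha, hb]
    have e2 : ∀ j, L j (x₀ - t • w i) = a j - t * b j := by
      intro j; rw [map_sub, map_smul]; simp [ha, hb]
    have A1 := hAbs (x₀ + t • w i)
    have A2 := hAbs (x₀ - t • w i)
    have A3 := hAbs x₀
    simp only [e1] at A1
    simp only [e2] at A2
    calc ∑ j, c j * (|a j + t * b j| + |a j - t * b j| - 2 * |a j|)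
        = (∑ j, c j * |a j + t * b j|) + (∑ j, c j * |a j - t * b j|)
          - 2 * ∑ j, c j * |a j| := by
          rw [Finset.mul_sum, ← Finset.sum_add_distrib, ← Finset.sum_sub_distrib]
          exact Finset.sum_congr rfl fun j _ => by ring
      _ = 0 := by rw [A1, A2, A3]; ring
  -- all terms with j ≠ i vanish
  rw [Finset.sum_eq_single i (fun j _ hj => by
      rw [abs_tri _ _ (by
        rw [abs_mul, abs_of_pos ht]; exact htle j hj), mul_zero])
    (fun hi => absurd (Finset.mem_univ i) hi)] at hkey
  have hai : a i = 0 := hx₀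
  rw [hai] at hkey
  have : |t * b i| = t * b i := abs_of_pos (by positivity)
  rw [zero_add, zero_sub, abs_neg, abs_zero, this] at hkey
  have hne : (2:ℝ) * (t * b i) ≠ 0 := by positivity
  have : c i * (2 * (t * b i)) = 0 := by linarith [hkey]
  exact (mul_eq_zero.1 this).resolve_right hne
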